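/- Generalized Newton–MacLaurin inequality: for λ ∈ Γ_m and integers m > l ≥ 0, r > s ≥ 0 with m ≥ r and l ≥ s, one has [ (σ_m(λ)/C(n,m)) / (σ_l(λ)/C(n,l)) ]^{1/(m-l)} ≤ [ (σ_r(λ)/C(n,r)) / (σ_s(λ)/C(n,s)) ]^{1/(r-s)}. -/

import Mathlib

open Finset

noncomputable def esym {n : ℕ} (k : ℕ) (lam : Fin n → ℝ) : ℝ :=
  ∑ s ∈ Finset.univ.powersetCard k, ∏ i ∈ s, lam i

noncomputable def esym1 {n : ℕ} (k : ℕ) (lam : Fin n → ℝ) (i : Fin n) : ℝ :=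
  ∑ s ∈ (Finset.univ.erase i).powersetCard k, ∏ j ∈ s, lam j

noncomputable def esym2 {n : ℕ} (k : ℕ) (lam : Fin n → ℝ) (i j : Fin n) : ℝ :=
  ∑ s ∈ ((Finset.univ.erase i).erase j).powersetCard k, ∏ l ∈ s, lam l

def GardingCone (n k : ℕ) : Set (Fin n → ℝ) :=
  {lam | ∀ j : ℕ, 1 ≤ j → j ≤ k → 0 < esym j lam}

namespace NA
open Polynomial Multiset

lemma esymm_cons (a : ℝ) (s : Multiset ℝ) (k : ℕ) :
    (a ::ₘ s).esymm (k+1) = s.esymm (k+1) + a * s.esymm k := by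
  simp [Multiset.esymm, Multiset.powersetCard_cons, Multiset.map_map, Function.comp,
    Multiset.sum_map_mul_left]

lemma esymm_zero (s : Multiset ℝ) : s.esymm 0 = 1 := by
  simp [Multiset.esymm]

lemma esymm_gt_card (s : Multiset ℝ) (k : ℕ) (h : Multiset.card s < k) : s.esymm k = 0 := by
  obtain ⟨i, hi, rfl⟩ : ∃ i, 0 < i ∧ k = Multiset.card s + i :=
    ⟨k - Multiset.card s, by omega, by omega⟩
  simp [Multiset.esymm, Multiset.powersetCard_card_add s hi]

lemma esymm_card (s : Multiset ℝ) : s.esymm (Multiset.card s) = s.prod := by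
  induction s using Multiset.induction with
  | empty => simp [esymm_zero]
  | cons a s ih =>
    rw [Multiset.card_cons, esymm_cons, ih, esymm_gt_card s _ (by omega)]
    simp

lemma esymm_one (s : Multiset ℝ) : s.esymm 1 = s.sum := by
  simp [Multiset.esymm, Multiset.powersetCard_one, Multiset.map_map, Function.comp]

lemma esymm_two (s : Multiset ℝ) :
    2 * s.esymm 2 = s.sum ^ 2 - (s.map (fun x => x ^ 2)).sum := by
  induction s using Multiset.induction with
  | empty => simp [esymm_gt_card 0 2 (by simp)]
  | cons a s ih =>
    rw [esymm_cons, esymm_one]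
    simp only [Multiset.map_cons, Multiset.sum_cons]
    ring_nf
    ring_nf at ih
    nlinarith [ih]

lemma sq_nonneg_sum (s : Multiset ℝ) : 0 ≤ (s.map (fun x => x ^ 2)).sum :=
  Multiset.sum_nonneg (by intro x hx; obtain ⟨y, _, rfl⟩ := Multiset.mem_map.mp hx; positivity)

lemma cs (s : Multiset ℝ) : s.sum ^ 2 ≤ (Multiset.card s) * (s.map (fun x => x ^ 2)).sum := by
  induction s using Multiset.induction with
  | empty => simp
  | cons a s ih =>
    simp only [Multiset.sum_cons, Multiset.map_cons, Multiset.card_cons]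
    push_cast
    have h1 := sq_nonneg_sum s
    have h2 : (0:ℝ) ≤ (Multiset.card s : ℝ) := by positivity
    rcases Multiset.empty_or_exists_mem s with rfl | ⟨x, hx⟩
    · simp
    have h3 : (1:ℝ) ≤ (Multiset.card s : ℝ) := by
      have := Multiset.card_pos_iff_exists_mem.mpr ⟨x, hx⟩
      exact_mod_cast this
    nlinarith [sq_nonneg ((Multiset.card s : ℝ) * a - s.sum), sq_nonneg (s.sum),
      mul_le_mul_of_nonneg_left ih h2]

lemma newton_bottom (y : Multiset ℝ) (n : ℕ) (hc : Multiset.card y = n) (hn : 2 ≤ n) :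
    y.esymm 0 * y.esymm 2 * ((n.choose 1 : ℕ) : ℝ) ^ 2 ≤
      y.esymm 1 ^ 2 * (((n.choose 0 : ℕ) : ℝ) * ((n.choose 2 : ℕ) : ℝ)) := by
  obtain ⟨d, rfl⟩ : ∃ d, n = d + 2 := ⟨n - 2, by omega⟩
  have h2 : (d+2).choose 2 * 2 = (d+2) * (d+1) := by
    have := Nat.choose_succ_right_eq (d+2) 1
    simp [Nat.choose_one_right] at this ⊢
    omega
  have h2R : ((d+2).choose 2 : ℝ) * 2 = ((d:ℝ)+2) * ((d:ℝ)+1) := by exact_mod_cast h2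
  rw [esymm_zero, esymm_one, Nat.choose_zero_right, Nat.choose_one_right]
  have hE2 := esymm_two y
  have hCS := cs y
  rw [hc] at hCS
  push_cast at hCS ⊢
  nlinarith [hCS, hE2, sq_nonneg_sum y]

lemma prod_ne_zero_of (t : Multiset ℝ) (h0 : (0:ℝ) ∉ t) : t.prod ≠ 0 := by
  intro h
  exact h0 (Multiset.prod_eq_zero_iff.mp h)

lemma esymm_compl (t : Multiset ℝ) (h0 : (0:ℝ) ∉ t) :
    ∀ j ≤ Multiset.card t,
      t.esymm (Multiset.card t - j) = t.prod * (t.map (fun x => x⁻¹)).esymm j := by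
  induction t using Multiset.induction with
  | empty =>
    intro j hj
    simp only [Multiset.card_zero, Nat.le_zero] at hj
    subst hj
    simp [esymm_zero]
  | cons a s ih =>
    intro j hj
    have ha : a ≠ 0 := fun h => h0 (by rw [h]; exact Multiset.mem_cons_self 0 s)
    have h0s : (0:ℝ) ∉ s := fun h => h0 (Multiset.mem_cons_of_mem h)
    rw [Multiset.card_cons] at hj ⊢
    rcases j with _ | i
    · rw [Nat.sub_zero, ← Multiset.card_cons a s, esymm_card, esymm_zero, mul_one]
    rcases Nat.lt_or_ge i (Multiset.card s) with hi | hi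
    · -- i < card s
      have hstep : Multiset.card s + 1 - (i+1) = (Multiset.card s - (i+1)) + 1 := by omega
      rw [hstep, esymm_cons, Multiset.map_cons, esymm_cons]
      have e1 : Multiset.card s - (i + 1) + 1 = Multiset.card s - i := by omega
      rw [e1, ih h0s i (by omega), ih h0s (i+1) (by omega)]
      rw [Multiset.prod_cons]
      field_simp
      ring
    · -- i ≥ card s : then i = card s (since i+1 ≤ card s + 1)
      have : i = Multiset.card s := by omega
      subst this
      rw [Nat.sub_self, esymm_zero, Multiset.map_cons,
        ← Multiset.card_map (fun x => x⁻¹) s, ← Multiset.card_cons, esymm_card,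
        Multiset.prod_cons, Multiset.prod_cons, Multiset.prod_map_inv']
      have hs := prod_ne_zero_of s h0s
      symm
      rw [mul_mul_mul_comm, mul_inv_cancel₀ ha, mul_inv_cancel₀ hs, one_mul]

lemma newton_top (t : Multiset ℝ) (n : ℕ) (hc : Multiset.card t = n) (hn : 2 ≤ n) :
    t.esymm (n-2) * t.esymm n * ((n.choose (n-1) : ℕ) : ℝ) ^ 2 ≤
      t.esymm (n-1) ^ 2 * (((n.choose (n-2) : ℕ) : ℝ) * ((n.choose n : ℕ) : ℝ)) := by
  by_cases h0 : (0:ℝ) ∈ t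
  · have hen : t.esymm n = 0 := by
      rw [← hc, esymm_card]; exact Multiset.prod_eq_zero h0
    rw [hen, mul_zero, zero_mul]
    positivity
  · set t' := t.map (fun x => x⁻¹) with ht'
    have hc' : Multiset.card t' = n := by rw [ht', Multiset.card_map, hc]
    have h2 : t.esymm (n-2) = t.prod * t'.esymm 2 := by
      rw [← hc]; exact esymm_compl t h0 2 (by omega)
    have h1 : t.esymm (n-1) = t.prod * t'.esymm 1 := by
      rw [← hc]; exact esymm_compl t h0 1 (by omega)
    have hn0 : t.esymm n = t.prod * t'.esymm 0 := by
      rw [← hc]; exact esymm_compl t h0 0 (by omega)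
    have hcs : n.choose (n-1) = n.choose 1 := by
      rw [← Nat.choose_symm (by omega : 1 ≤ n)]
    have hcs2 : n.choose (n-2) = n.choose 2 := by
      rw [← Nat.choose_symm (by omega : 2 ≤ n)]
    have hcsn : n.choose n = n.choose 0 := by simp
    rw [h2, h1, hn0, hcs, hcs2, hcsn]
    have hb := newton_bottom t' n hc' hn
    calc t.prod * t'.esymm 2 * (t.prod * t'.esymm 0) * ((n.choose 1 : ℕ) : ℝ) ^ 2
        = t.prod ^ 2 * (t'.esymm 0 * t'.esymm 2 * ((n.choose 1 : ℕ) : ℝ) ^ 2) := by ring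
      _ ≤ t.prod ^ 2 * (t'.esymm 1 ^ 2 * (((n.choose 0 : ℕ) : ℝ) * ((n.choose 2 : ℕ) : ℝ))) := by
          apply mul_le_mul_of_nonneg_left hb (by positivity)
      _ = (t.prod * t'.esymm 1) ^ 2 * (((n.choose 2 : ℕ) : ℝ) * ((n.choose 0 : ℕ) : ℝ)) := by ring

lemma deriv_esymm (t : Multiset ℝ) (n : ℕ) (hc : Multiset.card t = n) (hn : 1 ≤ n) :
    ∃ u : Multiset ℝ, Multiset.card u = n - 1 ∧
      ∀ j ≤ n - 1, (n : ℝ) * u.esymm j = ((n - j : ℕ) : ℝ) * t.esymm j := by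
  set P : ℝ[X] := (t.map fun a => X - C a).prod with hP
  have hdeg : P.natDegree = n := by
    rw [hP, natDegree_multiset_prod_X_sub_C_eq_card, hc]
  have hmonic : P.Monic := monic_multiset_prod_of_monic t _ (fun a _ => monic_X_sub_C a)
  have hroots : P.roots = t := roots_multiset_prod_X_sub_C t
  set Q := derivative P with hQ
  have hcoefftop : Q.coeff (n - 1) = (n : ℝ) := by
    rw [hQ]
    have h1 : (n - 1) + 1 = n := by omega
    rw [coeff_derivative, h1]
    have h2 : P.coeff n = 1 := by
      rw [← hdeg]; exact hmonic.coeff_natDegree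
    rw [h2, one_mul, Nat.cast_sub hn]
    push_cast
    ring
  have hQne : Q ≠ 0 := by
    intro h
    have hn0 : ((n : ℝ)) ≠ 0 := Nat.cast_ne_zero.mpr (by omega)
    rw [h, coeff_zero] at hcoefftop
    exact hn0 hcoefftop.symm
  have hdegQle : Q.natDegree ≤ n - 1 := by
    have h := natDegree_derivative_le P
    rw [← hQ, hdeg] at h
    exact h
  have hdegQ : Q.natDegree = n - 1 := by
    refine le_antisymm hdegQle (le_natDegree_of_ne_zero ?_)
    rw [hcoefftop]
    exact Nat.cast_ne_zero.mpr (by omega)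
  have hcardle : Multiset.card Q.roots ≤ n - 1 := hdegQ ▸ card_roots' Q
  have hcardge : n ≤ Multiset.card Q.roots + 1 := by
    have h := card_roots_le_derivative P
    rw [hroots, hc, ← hQ] at h
    exact h
  have hcard : Multiset.card Q.roots = n - 1 := by omega
  refine ⟨Q.roots, hcard, ?_⟩
  intro j hj
  have hsplits : Splits Q := splits_iff_card_roots.mpr (by rw [hcard, hdegQ])
  have hlead : Q.leadingCoeff = (n : ℝ) := by
    rw [leadingCoeff, hdegQ, hcoefftop]
  have hfact : Q = C ((n : ℕ) : ℝ) * (Q.roots.map fun a => X - C a).prod := by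
    conv_lhs => rw [hsplits.eq_prod_roots]
    rw [hlead]
  have hkey : Q.coeff ((n-1) - j) =
      (C ((n : ℕ) : ℝ) * (Q.roots.map fun a => X - C a).prod).coeff ((n-1) - j) := by
    rw [← hfact]
  rw [coeff_C_mul] at hkey
  rw [Multiset.prod_X_sub_C_coeff Q.roots (by rw [hcard]; omega)] at hkey
  rw [hcard] at hkey
  have hjj : (n - 1) - ((n-1) - j) = j := by omega
  rw [hjj] at hkey
  have hstep : Q.coeff ((n-1) - j) = P.coeff (n - j) * ((n - j : ℕ) : ℝ) := by
    rw [hQ, coeff_derivative]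
    have h1 : (n-1) - j + 1 = n - j := by omega
    rw [h1]
    have h2 : ((n - 1 - j : ℕ) : ℝ) + 1 = ((n - j : ℕ) : ℝ) := by
      exact_mod_cast congrArg (Nat.cast (R := ℝ)) (show (n-1-j)+1 = n-j by omega)
    rw [h2]
  rw [hstep] at hkey
  have hPco : P.coeff (n - j) = (-1 : ℝ) ^ j * t.esymm j := by
    rw [hP, Multiset.prod_X_sub_C_coeff t (by rw [hc]; omega)]
    have he : Multiset.card t - (n - j) = j := by rw [hc]; omega
    rw [he]
  rw [hPco] at hkey
  have hm1 : ((-1 : ℝ) ^ j) ≠ 0 := pow_ne_zero j (by norm_num)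
  have hkey2 : ((-1:ℝ)^j) * (((n : ℕ):ℝ) * Q.roots.esymm j) =
      ((-1:ℝ)^j) * (((n - j : ℕ):ℝ) * t.esymm j) := by linear_combination -hkey
  exact mul_left_cancel₀ hm1 hkey2

lemma choose_id (N i : ℕ) : (N + 1 - i) * (N+1).choose i = (N+1) * N.choose i := by
  calc (N + 1 - i) * (N+1).choose i = (N+1).choose i * (N+1-i) := mul_comm _ _
    _ = (N+1).choose (i+1) * (i+1) := (Nat.choose_succ_right_eq (N+1) i).symm
    _ = (N+1) * N.choose i := by
        simpa [Nat.succ_eq_add_one] using (Nat.add_one_mul_choose_eq N i).symm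

theorem newtonM : ∀ (n : ℕ) (t : Multiset ℝ), Multiset.card t = n → ∀ j, j + 2 ≤ n →
    t.esymm j * t.esymm (j+2) * ((n.choose (j+1) : ℕ) : ℝ) ^ 2 ≤
      (t.esymm (j+1))^2 * (((n.choose j : ℕ) : ℝ) * ((n.choose (j+2) : ℕ) : ℝ)) := by
  intro n
  induction n with
  | zero => intro t hc j hj; omega
  | succ n ih =>
    intro t hc j hj
    rcases Nat.lt_or_ge (j+2) (n+1) with hlt | hge
    · -- derivative reduction
      obtain ⟨d, hd⟩ : ∃ d, n + 1 = j + 3 + d := ⟨n + 1 - (j+3), by omega⟩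
      obtain ⟨u, hcu, hrel⟩ := deriv_esymm t (n+1) hc (by omega)
      simp only [Nat.add_sub_cancel] at hcu hrel
      have IH := ih u hcu j (by omega)
      set M : ℝ := ((n+1 : ℕ) : ℝ) with hM
      have hMpos : (0:ℝ) < M := by rw [hM]; positivity
      have hMne : M ≠ 0 := ne_of_gt hMpos
      -- relations
      have hA : M * u.esymm j = ((d:ℝ) + 3) * t.esymm j := by
        have := hrel j (by omega)
        have hcast : ((n + 1 - j : ℕ) : ℝ) = (d:ℝ) + 3 := by
          rw [show n + 1 - j = d + 3 by omega]; push_cast; ring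
        rw [hcast] at this; exact_mod_cast this
      have hB : M * u.esymm (j+1) = ((d:ℝ) + 2) * t.esymm (j+1) := by
        have := hrel (j+1) (by omega)
        have hcast : ((n + 1 - (j+1) : ℕ) : ℝ) = (d:ℝ) + 2 := by
          rw [show n + 1 - (j+1) = d + 2 by omega]; push_cast; ring
        rw [hcast] at this; exact_mod_cast this
      have hCc : M * u.esymm (j+2) = ((d:ℝ) + 1) * t.esymm (j+2) := by
        have := hrel (j+2) (by omega)
        have hcast : ((n + 1 - (j+2) : ℕ) : ℝ) = (d:ℝ) + 1 := by
          rw [show n + 1 - (j+2) = d + 1 by omega]; push_cast; ring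
        rw [hcast] at this; exact_mod_cast this
      -- choose relations
      have hch : ∀ i c : ℕ, n + 1 - i = c → M * ((n.choose i : ℕ) : ℝ) =
          (c : ℝ) * (((n+1).choose i : ℕ) : ℝ) := by
        intro i c hci
        have h := choose_id n i
        rw [hci] at h
        have h2 : ((c : ℕ) : ℝ) * (((n+1).choose i : ℕ) : ℝ) =
            ((n+1 : ℕ) : ℝ) * ((n.choose i : ℕ) : ℝ) := by exact_mod_cast h
        rw [hM]
        linarith [h2]
      have hCj : M * ((n.choose j : ℕ) : ℝ) = ((d:ℝ) + 3) * (((n+1).choose j : ℕ) : ℝ) := by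
        have := hch j (d+3) (by omega); push_cast at this ⊢; linarith
      have hCj1 : M * ((n.choose (j+1) : ℕ) : ℝ) = ((d:ℝ) + 2) * (((n+1).choose (j+1) : ℕ) : ℝ) := by
        have := hch (j+1) (d+2) (by omega); push_cast at this ⊢; linarith
      have hCj2 : M * ((n.choose (j+2) : ℕ) : ℝ) = ((d:ℝ) + 1) * (((n+1).choose (j+2) : ℕ) : ℝ) := by
        have := hch (j+2) (d+1) (by omega); push_cast at this ⊢; linarith
      -- combine
      have hK : (0:ℝ) < ((d:ℝ)+1) * ((d:ℝ)+2)^2 * ((d:ℝ)+3) := by positivity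
      rw [← mul_le_mul_iff_right₀ hK]
      calc ((d:ℝ)+1) * ((d:ℝ)+2)^2 * ((d:ℝ)+3) *
            (t.esymm j * t.esymm (j+2) * (((n+1).choose (j+1) : ℕ) : ℝ) ^ 2)
          = (((d:ℝ)+3) * t.esymm j) * (((d:ℝ)+1) * t.esymm (j+2)) *
              (((d:ℝ)+2) * (((n+1).choose (j+1) : ℕ) : ℝ)) ^ 2 := by ring
        _ = M^4 * (u.esymm j * u.esymm (j+2) * ((n.choose (j+1) : ℕ) : ℝ) ^ 2) := by
            rw [← hA, ← hCc, ← hCj1]; ring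
        _ ≤ M^4 * ((u.esymm (j+1))^2 * (((n.choose j : ℕ) : ℝ) * ((n.choose (j+2) : ℕ) : ℝ))) := by
            exact mul_le_mul_of_nonneg_left IH (by positivity)
        _ = (M * u.esymm (j+1))^2 * ((M * ((n.choose j : ℕ) : ℝ)) * (M * ((n.choose (j+2) : ℕ) : ℝ))) := by
            ring
        _ = (((d:ℝ)+2) * t.esymm (j+1))^2 *
              ((((d:ℝ)+3) * (((n+1).choose j : ℕ) : ℝ)) * (((d:ℝ)+1) * (((n+1).choose (j+2) : ℕ) : ℝ))) := by
            rw [hB, hCj, hCj2]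
        _ = ((d:ℝ)+1) * ((d:ℝ)+2)^2 * ((d:ℝ)+3) *
              ((t.esymm (j+1))^2 * ((((n+1).choose j : ℕ) : ℝ) * (((n+1).choose (j+2) : ℕ) : ℝ))) := by
            ring
    · -- top case
      have hje : j + 2 = n + 1 := by omega
      have h := newton_top t (n+1) hc (by omega)
      rw [show n + 1 - 2 = j by omega, show n + 1 - 1 = j + 1 by omega, ← hje] at h
      rw [show n + 1 = j + 2 from by omega]
      exact h

lemma esym_eq_esymm {n : ℕ} (k : ℕ) (lam : Fin n → ℝ) :
    esym k lam = (Finset.univ.val.map lam).esymm k := by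
  rw [Finset.esymm_map_val]
  rfl

lemma esym_zero {n : ℕ} (lam : Fin n → ℝ) : esym 0 lam = 1 := by
  simp [esym]

lemma newtonF {n : ℕ} (lam : Fin n → ℝ) (j : ℕ) (hj : j + 2 ≤ n) :
    esym j lam * esym (j+2) lam * ((n.choose (j+1) : ℕ) : ℝ) ^ 2 ≤
      (esym (j+1) lam)^2 * (((n.choose j : ℕ) : ℝ) * ((n.choose (j+2) : ℕ) : ℝ)) := by
  have hc : Multiset.card (Finset.univ.val.map lam) = n := by
    simp
  simp only [esym_eq_esymm]
  exact newtonM n _ hc j hj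

end NA

theorem stmt9 {n : ℕ} (m l r s : ℕ) (hml : l < m) (hrs : s < r) (hmr : r ≤ m)
    (hls : s ≤ l) (hmn : m ≤ n) (lam : Fin n → ℝ) (hG : lam ∈ GardingCone n m) :
    ((esym m lam / (n.choose m : ℝ)) / (esym l lam / (n.choose l : ℝ))) ^
        ((1 : ℝ) / ((m : ℝ) - (l : ℝ))) ≤
    ((esym r lam / (n.choose r : ℝ)) / (esym s lam / (n.choose s : ℝ))) ^
        ((1 : ℝ) / ((r : ℝ) - (s : ℝ))) := by
  set P : ℕ → ℝ := fun j => esym j lam / (n.choose j : ℝ) with hP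
  have hchoose : ∀ j ≤ m, (0:ℝ) < (n.choose j : ℝ) := by
    intro j hj
    exact_mod_cast Nat.choose_pos (le_trans hj hmn)
  have hPpos : ∀ j ≤ m, 0 < P j := by
    intro j hj
    rcases Nat.eq_zero_or_pos j with rfl | hj1
    · simp [hP, NA.esym_zero]
    · exact div_pos (hG j hj1 hj) (hchoose j hj)
  -- Newton in P form
  have hNewt : ∀ j, j + 2 ≤ m → P j * P (j+2) ≤ P (j+1) ^ 2 := by
    intro j hj
    have h := NA.newtonF lam j (le_trans hj hmn)
    have c1 := hchoose j (by omega)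
    have c2 := hchoose (j+1) (by omega)
    have c3 := hchoose (j+2) (by omega)
    rw [hP]
    simp only
    rw [div_mul_div_comm, div_pow, div_le_div_iff₀ (by positivity) (by positivity)]
    nlinarith [h]
  set Q : ℕ → ℝ := fun j => P (j+1) / P j with hQ
  have hQpos : ∀ j, j + 1 ≤ m → 0 < Q j := by
    intro j hj
    exact div_pos (hPpos (j+1) hj) (hPpos j (by omega))
  have hQstep : ∀ j, j + 2 ≤ m → Q (j+1) ≤ Q j := by
    intro j hj
    rw [hQ]
    simp only
    rw [div_le_div_iff₀ (hPpos (j+1) (by omega)) (hPpos j (by omega))]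
    nlinarith [hNewt j hj, hPpos (j+1) (by omega)]
  have hQanti : ∀ j, j + 1 ≤ m → ∀ i ≤ j, Q j ≤ Q i := by
    intro j
    induction j with
    | zero =>
      intro _ i hi
      have : i = 0 := Nat.le_zero.mp hi
      subst this
      exact le_refl _
    | succ k ihk =>
      intro hk i hi
      rcases Nat.lt_or_ge i (k+1) with h | h
      · exact le_trans (hQstep k hk) (ihk (by omega) i (by omega))
      · have : i = k + 1 := by omega
        subst this
        exact le_refl _
  -- telescoping
  have hT : ∀ a b, a ≤ b → b ≤ m → P b / P a = ∏ j ∈ Finset.Ico a b, Q j := by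
    intro a b hab hbm
    induction b, hab using Nat.le_induction with
    | base =>
      rw [Finset.Ico_self, Finset.prod_empty, div_self (ne_of_gt (hPpos a (by omega)))]
    | succ b hab ihb =>
      rw [Finset.prod_Ico_succ_top hab, ← ihb (by omega)]
      have h1 := ne_of_gt (hPpos b (by omega))
      have h2 := ne_of_gt (hPpos a (by omega))
      rw [hQ]
      simp only
      field_simp
  -- windows
  have hQnn : ∀ i ∈ Finset.Ico s m, 0 ≤ Q i := by
    intro i hi
    simp only [Finset.mem_Ico] at hi
    exact (hQpos i (by omega)).le
  set X := P m / P l with hXdef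
  set Y := P r / P s with hYdef
  have hX : 0 < X := div_pos (hPpos m le_rfl) (hPpos l hml.le)
  have hY : 0 < Y := div_pos (hPpos r hmr) (hPpos s (le_trans hls hml.le))
  have hXprod : X = ∏ j ∈ Finset.Ico l m, Q j := hT l m hml.le le_rfl
  have hYprod : Y = ∏ j ∈ Finset.Ico s r, Q j := hT s r hrs.le hmr
  set W := ∏ j ∈ Finset.Ico s l, Q j with hWdef
  set V := ∏ j ∈ Finset.Ico r m, Q j with hVdef
  have hWnn : 0 ≤ W := Finset.prod_nonneg (fun i hi => hQnn i (by
    simp only [Finset.mem_Ico] at hi ⊢; omega))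
  have hVnn : 0 ≤ V := Finset.prod_nonneg (fun i hi => hQnn i (by
    simp only [Finset.mem_Ico] at hi ⊢; omega))
  have stepA : X ^ (l - s) ≤ W ^ (m - l) := by
    have h1 : ∀ j ∈ Finset.Ico s l, X ≤ Q j ^ (m - l) := by
      intro j hj
      simp only [Finset.mem_Ico] at hj
      rw [hXprod, ← Nat.card_Ico l m, ← Finset.prod_const]
      apply Finset.prod_le_prod
      · intro i hi
        simp only [Finset.mem_Ico] at hi
        exact (hQpos i (by omega)).le
      · intro i hi
        simp only [Finset.mem_Ico] at hi
        exact hQanti i (by omega) j (by omega)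
    calc X ^ (l - s) = ∏ _j ∈ Finset.Ico s l, X := by
          rw [Finset.prod_const, Nat.card_Ico]
      _ ≤ ∏ j ∈ Finset.Ico s l, Q j ^ (m - l) :=
          Finset.prod_le_prod (fun _ _ => hX.le) h1
      _ = W ^ (m - l) := by rw [hWdef, ← Finset.prod_pow]
  have stepB : V ^ (r - s) ≤ Y ^ (m - r) := by
    have h1 : ∀ j ∈ Finset.Ico s r, V ≤ Q j ^ (m - r) := by
      intro j hj
      simp only [Finset.mem_Ico] at hj
      rw [hVdef, ← Nat.card_Ico r m, ← Finset.prod_const]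
      apply Finset.prod_le_prod
      · intro i hi
        simp only [Finset.mem_Ico] at hi
        exact (hQpos i (by omega)).le
      · intro i hi
        simp only [Finset.mem_Ico] at hi
        exact hQanti i (by omega) j (by omega)
    calc V ^ (r - s) = ∏ _j ∈ Finset.Ico s r, V := by
          rw [Finset.prod_const, Nat.card_Ico]
      _ ≤ ∏ j ∈ Finset.Ico s r, Q j ^ (m - r) :=
          Finset.prod_le_prod (fun _ _ => Finset.prod_nonneg (fun i hi => hQnn i (by
            simp only [Finset.mem_Ico] at hi ⊢; omega))) h1
      _ = Y ^ (m - r) := by rw [hYprod, ← Finset.prod_pow]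
  set Z := ∏ j ∈ Finset.Ico s m, Q j with hZdef
  have hZ1 : Z = W * X := by
    rw [hZdef, hWdef, hXprod]
    exact (Finset.prod_Ico_consecutive Q hls (le_of_lt hml)).symm
  have hZ2 : Z = Y * V := by
    rw [hZdef, hYprod, hVdef]
    exact (Finset.prod_Ico_consecutive Q hrs.le hmr).symm
  have hZnn : 0 ≤ Z := hZ2 ▸ mul_nonneg hY.le hVnn
  have c1 : X ^ (m - s) ≤ Z ^ (m - l) := by
    calc X ^ (m - s) = X ^ (m - l) * X ^ (l - s) := by
          rw [← pow_add]; congr 1; omega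
      _ ≤ X ^ (m - l) * W ^ (m - l) :=
          mul_le_mul_of_nonneg_left stepA (pow_nonneg hX.le _)
      _ = Z ^ (m - l) := by rw [hZ1, mul_pow, mul_comm]
  have c2 : Z ^ (r - s) ≤ Y ^ (m - s) := by
    calc Z ^ (r - s) = Y ^ (r - s) * V ^ (r - s) := by rw [hZ2, mul_pow]
      _ ≤ Y ^ (r - s) * Y ^ (m - r) :=
          mul_le_mul_of_nonneg_left stepB (pow_nonneg hY.le _)
      _ = Y ^ (m - s) := by rw [← pow_add]; congr 1; omega
  have hfin : X ^ (r - s) ≤ Y ^ (m - l) := by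
    have hms : m - s ≠ 0 := by omega
    have big : (X ^ (r - s)) ^ (m - s) ≤ (Y ^ (m - l)) ^ (m - s) := by
      calc (X ^ (r - s)) ^ (m - s) = (X ^ (m - s)) ^ (r - s) := by
            rw [← pow_mul, ← pow_mul, Nat.mul_comm]
        _ ≤ (Z ^ (m - l)) ^ (r - s) := pow_le_pow_left₀ (pow_nonneg hX.le _) c1 _
        _ = (Z ^ (r - s)) ^ (m - l) := by rw [← pow_mul, ← pow_mul, Nat.mul_comm]
        _ ≤ (Y ^ (m - s)) ^ (m - l) := pow_le_pow_left₀ (pow_nonneg hZnn _) c2 _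
        _ = (Y ^ (m - l)) ^ (m - s) := by rw [← pow_mul, ← pow_mul, Nat.mul_comm]
    exact (pow_le_pow_iff_left₀ (pow_nonneg hX.le _) (pow_nonneg hY.le _) hms).mp big
  -- rpow conclusion
  have hb : ((r - s : ℕ) : ℝ) = (r : ℝ) - (s : ℝ) := by
    push_cast [Nat.cast_sub hrs.le]; ring
  have ha : ((m - l : ℕ) : ℝ) = (m : ℝ) - (l : ℝ) := by
    push_cast [Nat.cast_sub hml.le]; ring
  have hapos : (0:ℝ) < (m : ℝ) - (l : ℝ) := by
    rw [← ha]; exact_mod_cast Nat.sub_pos_of_lt hml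
  have hbpos : (0:ℝ) < (r : ℝ) - (s : ℝ) := by
    rw [← hb]; exact_mod_cast Nat.sub_pos_of_lt hrs
  have step : (X ^ (r - s)) ^ ((1:ℝ)/(((m:ℝ) - l) * ((r:ℝ) - s))) ≤
      (Y ^ (m - l)) ^ ((1:ℝ)/(((m:ℝ) - l) * ((r:ℝ) - s))) :=
    Real.rpow_le_rpow (pow_nonneg hX.le _) hfin
      (one_div_nonneg.mpr (mul_nonneg hapos.le hbpos.le))
  rw [← Real.rpow_natCast X (r - s), ← Real.rpow_natCast Y (m - l),
    ← Real.rpow_mul hX.le, ← Real.rpow_mul hY.le] at step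
  have e1 : ((r - s : ℕ) : ℝ) * ((1:ℝ)/(((m:ℝ) - l) * ((r:ℝ) - s))) = (1:ℝ)/((m:ℝ) - l) := by
    rw [hb]; field_simp
  have e2 : ((m - l : ℕ) : ℝ) * ((1:ℝ)/(((m:ℝ) - l) * ((r:ℝ) - s))) = (1:ℝ)/((r:ℝ) - s) := by
    rw [ha]; field_simp
  rw [e1, e2] at step
  exact step
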